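/- Let P₃ = v₁v₂v₃ be a path and H a nontrivial connected graph with vertex u. Let G₁ = P₃(v₃)∘H(u) (identify an endpoint of P₃ with u) and G₂ = P₃(v₂)∘H(u) (identify the middle vertex of P₃ with u). Then ρ(G₁²) < ρ(G₂²). -/

import Mathlib

open SimpleGraph Finset Matrix
open scoped Classical

/-- Spectral radius of a finite simple graph: the supremum of eigenvalues of its
adjacency matrix. -/
noncomputable def specRad {V : Type*} [Fintype V] (G : SimpleGraph V) : ℝ :=
  sSup {μ : ℝ | ∃ x : V → ℝ, x ≠ 0 ∧
    (Matrix.of fun i j => if G.Adj i j then (1 : ℝ) else 0) *ᵥ x = μ • x}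

/-- The square of a graph: join vertices at distance 1 or 2. -/
def gsq {V : Type*} (G : SimpleGraph V) : SimpleGraph V :=
  SimpleGraph.fromRel (fun a b => G.dist a b = 1 ∨ G.dist a b = 2)

/-- Coalescence `H₁(v) ∘ H₂(w)`: identify the vertex `v` of `H₁` with the vertex `w`
of `H₂` (the identified vertex is `Sum.inl v`). -/
def coal {V₁ V₂ : Type*} (H₁ : SimpleGraph V₁) (v : V₁) (H₂ : SimpleGraph V₂) (w : V₂) :
    SimpleGraph (V₁ ⊕ {x : V₂ // x ≠ w}) :=
  SimpleGraph.fromRel (fun a b =>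
    match a, b with
    | Sum.inl a, Sum.inl b => H₁.Adj a b
    | Sum.inl a, Sum.inr b => a = v ∧ H₂.Adj w b.1
    | Sum.inr a, Sum.inr b => H₂.Adj a.1 b.1
    | Sum.inr _, Sum.inl _ => False)

/-- The star on `n` vertices with center `0`. -/
def starGraph (n : ℕ) : SimpleGraph (Fin n) :=
  SimpleGraph.fromRel (fun a _ => a.val = 0)

/-- The star on a vertex set `V` centered at `u`. -/
def starAt {V : Type*} (u : V) : SimpleGraph V :=
  SimpleGraph.fromRel (fun a _ => a = u)

/-- A unicyclic graph: connected with exactly as many edges as vertices. -/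
def IsUnicyclic {V : Type*} [Fintype V] (G : SimpleGraph V) : Prop :=
  G.Connected ∧ G.edgeSet.ncard = Fintype.card V

/-- Degree of a vertex. -/
noncomputable def deg {V : Type*} [Fintype V] (G : SimpleGraph V) (v : V) : ℕ :=
  (Finset.univ.filter fun u => G.Adj v u).card

/-- Average degree of a finite graph, as a real number. -/
noncomputable def avgDeg {V : Type*} [Fintype V] (G : SimpleGraph V) : ℝ :=
  (∑ v, (deg G v : ℝ)) / Fintype.card V

/-- Maximum degree of a finite graph. -/
noncomputable def maxDeg {V : Type*} [Fintype V] (G : SimpleGraph V) : ℕ :=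
  Finset.univ.sup fun v => deg G v

set_option linter.unusedSectionVars false



noncomputable def adjM {V : Type*} [Fintype V] (G : SimpleGraph V) : Matrix V V ℝ :=
  Matrix.of fun i j => if G.Adj i j then (1 : ℝ) else 0

lemma adjM_apply {V : Type*} [Fintype V] (G : SimpleGraph V) (i j : V) :
    adjM G i j = if G.Adj i j then (1 : ℝ) else 0 := rfl

lemma adjM_nonneg {V : Type*} [Fintype V] (G : SimpleGraph V) (i j : V) :
    0 ≤ adjM G i j := by rw [adjM_apply]; split <;> norm_num

lemma specRad_def {V : Type*} [Fintype V] (G : SimpleGraph V) :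
    specRad G = sSup {μ : ℝ | ∃ x : V → ℝ, x ≠ 0 ∧ adjM G *ᵥ x = μ • x} := rfl

noncomputable def qf {V : Type*} [Fintype V] (G : SimpleGraph V) (x : V → ℝ) : ℝ :=
  ∑ i, ∑ j, adjM G i j * x j * x i

lemma qf_eq_mulVec {V : Type*} [Fintype V] (G : SimpleGraph V) (x : V → ℝ) :
    qf G x = ∑ i, (adjM G *ᵥ x) i * x i := by
  unfold qf Matrix.mulVec dotProduct
  simp [Finset.sum_mul]

theorem specRad_spec {V : Type*} [Fintype V] [Nonempty V] (G : SimpleGraph V) :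
    ∃ y : V → ℝ, (∀ i, 0 ≤ y i) ∧ (∑ i, y i ^ 2 = 1) ∧
      adjM G *ᵥ y = specRad G • y ∧ qf G y = specRad G ∧
      ∀ z : V → ℝ, (∑ i, z i ^ 2 = 1) → qf G z ≤ specRad G := by
  classical
  set T : EuclideanSpace ℝ V →L[ℝ] EuclideanSpace ℝ V :=
    Matrix.toEuclideanCLM (𝕜 := ℝ) (adjM G) with hT
  have hTapp : ∀ (x : EuclideanSpace ℝ V) (i : V), T x i = (adjM G *ᵥ (fun j => x j)) i :=
    fun _ _ => rfl
  have hstar : star (adjM G) = adjM G := by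
    ext i j
    simp only [Matrix.star_apply, adjM_apply, star_trivial]
    rw [SimpleGraph.adj_comm]
  have hsa : IsSelfAdjoint T := by
    rw [hT]
    show star _ = _
    rw [← map_star, hstar]
  have hinner : ∀ (a b : EuclideanSpace ℝ V), (inner ℝ a b : ℝ) = ∑ i, a i * b i := by
    intro a b
    simp [PiLp.inner_apply, RCLike.inner_apply, mul_comm]
  have hf : ∀ (x : EuclideanSpace ℝ V), T.reApplyInnerSelf x = qf G (fun i => x i) := by
    intro x
    rw [ContinuousLinearMap.reApplyInnerSelf_apply, qf_eq_mulVec]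
    simp only [RCLike.re_to_real]
    rw [hinner]
    exact Finset.sum_congr rfl fun i _ => by rw [hTapp]
  have hnorm : ∀ (x : EuclideanSpace ℝ V), ‖x‖ ^ 2 = ∑ i, x i ^ 2 := by
    intro x
    rw [← real_inner_self_eq_norm_sq, hinner]
    exact Finset.sum_congr rfl fun i _ => (sq (x i)).symm
  have hsph : (Metric.sphere (0 : EuclideanSpace ℝ V) 1).Nonempty := by
    apply NormedSpace.sphere_nonempty.2; norm_num
  obtain ⟨x₀, hx₀s, hx₀max⟩ := (isCompact_sphere (0 : EuclideanSpace ℝ V) 1).exists_isMaxOn hsph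
    (T.reApplyInnerSelf_continuous.continuousOn)
  have hx₀n : ‖x₀‖ = 1 := by simpa using hx₀s
  set y : EuclideanSpace ℝ V := (WithLp.equiv _ _).symm (fun i => |x₀ i|) with hy
  have hyco : ∀ i, y i = |x₀ i| := fun i => rfl
  have hyn : ‖y‖ = 1 := by
    have h1 : ‖y‖ ^ 2 = ‖x₀‖ ^ 2 := by
      rw [hnorm, hnorm]
      exact Finset.sum_congr rfl (fun i _ => by rw [hyco, sq_abs])
    nlinarith [norm_nonneg y, norm_nonneg x₀]
  have hys : y ∈ Metric.sphere (0 : EuclideanSpace ℝ V) 1 := by simpa using hyn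
  have hfy : T.reApplyInnerSelf x₀ ≤ T.reApplyInnerSelf y := by
    rw [hf, hf]
    unfold qf
    apply Finset.sum_le_sum; intro i _
    apply Finset.sum_le_sum; intro j _
    show adjM G i j * (x₀ j) * (x₀ i) ≤ adjM G i j * (y j) * (y i)
    rw [hyco, hyco]
    calc adjM G i j * (x₀ j) * (x₀ i) ≤ |adjM G i j * (x₀ j) * (x₀ i)| := le_abs_self _
    _ = adjM G i j * |x₀ j| * |x₀ i| := by
        rw [abs_mul, abs_mul, abs_of_nonneg (adjM_nonneg G i j)]
  have hymax : IsMaxOn T.reApplyInnerSelf (Metric.sphere (0 : EuclideanSpace ℝ V) 1) y :=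
    fun z hz => le_trans (hx₀max hz) hfy
  have hyne : y ≠ 0 := by
    intro h; rw [h] at hyn; simp at hyn
  have heig := hsa.hasEigenvector_of_isMaxOn hyne (by rwa [hyn])
  set μ : ℝ := ⨆ x : { x : EuclideanSpace ℝ V // x ≠ 0 }, T.rayleighQuotient x with hμ
  have hTy : T y = μ • y := by
    have := heig.apply_eq_smul
    simpa using this
  -- reApply of a unit eigenvector equals its eigenvalue
  have hreApply : ∀ (x : EuclideanSpace ℝ V) (ν : ℝ), ‖x‖ = 1 → T x = ν • x →
      T.reApplyInnerSelf x = ν := by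
    intro x ν hx hTx
    rw [ContinuousLinearMap.reApplyInnerSelf_apply, hTx]
    simp only [RCLike.re_to_real]
    rw [real_inner_smul_left, real_inner_self_eq_norm_sq, hx]
    ring
  have hμy : T.reApplyInnerSelf y = μ := hreApply y μ hyn hTy
  -- identify specRad with μ
  have hmem : μ ∈ {ν : ℝ | ∃ x : V → ℝ, x ≠ 0 ∧ adjM G *ᵥ x = ν • x} := by
    refine ⟨fun i => y i, ?_, ?_⟩
    · intro h
      apply hyne
      ext i
      have := congrFun h i
      simpa using this
    · funext i
      have h2 : T y i = μ * y i := by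
        have := congrArg (fun (v : EuclideanSpace ℝ V) => v i) hTy
        simpa [PiLp.smul_apply] using this
      rw [← hTapp y i] at *
      simpa [Pi.smul_apply, smul_eq_mul] using h2
  have hbdd : ∀ ν ∈ {ν : ℝ | ∃ x : V → ℝ, x ≠ 0 ∧ adjM G *ᵥ x = ν • x}, ν ≤ μ := by
    rintro ν ⟨w, hw0, hww⟩
    set wE : EuclideanSpace ℝ V := (WithLp.equiv _ _).symm w with hwE
    have hwEne : wE ≠ 0 := by
      intro h
      apply hw0
      funext i
      have := congrFun (congrArg (WithLp.equiv _ _) h) i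
      exact this
    have hn : (0:ℝ) < ‖wE‖ := norm_pos_iff.2 hwEne
    set x : EuclideanSpace ℝ V := ‖wE‖⁻¹ • wE with hx
    have hxn : ‖x‖ = 1 := by
      rw [hx, norm_smul]
      simp [abs_of_pos hn, inv_mul_cancel₀ hn.ne']
    have hTx : T x = ν • x := by
      have hTwE : T wE = ν • wE := by
        ext i
        have h1 : T wE i = (adjM G *ᵥ w) i := hTapp wE i
        rw [h1, hww]
        rfl
      rw [hx, T.map_smul, hTwE, smul_comm]
    have : T.reApplyInnerSelf x = ν := hreApply x ν hxn hTx
    rw [← this, ← hμy]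
    exact hymax (by simpa using hxn)
  have hspec : specRad G = μ := by
    rw [specRad_def]
    apply le_antisymm
    · exact csSup_le ⟨μ, hmem⟩ hbdd
    · exact le_csSup ⟨μ, hbdd⟩ hmem
  refine ⟨fun i => y i, fun i => show (0:ℝ) ≤ y i from (hyco i) ▸ abs_nonneg (x₀ i), ?_, ?_, ?_, ?_⟩
  · rw [← hnorm, hyn]; norm_num
  · funext i
    have h2 : T y i = μ * y i := by
      have := congrArg (fun (v : EuclideanSpace ℝ V) => v i) hTy
      simpa [PiLp.smul_apply] using this
    rw [← hTapp y i]
    simpa [hspec, Pi.smul_apply, smul_eq_mul] using h2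
  · rw [hspec, ← hμy, hf]
  · intro z hz
    set zE : EuclideanSpace ℝ V := (WithLp.equiv _ _).symm z with hzE
    have hzn : ‖zE‖ = 1 := by
      have : ‖zE‖ ^ 2 = 1 := by rw [hnorm]; exact hz
      nlinarith [norm_nonneg zE]
    have h3 : T.reApplyInnerSelf zE ≤ T.reApplyInnerSelf y :=
      hymax (show zE ∈ Metric.sphere (0 : EuclideanSpace ℝ V) 1 by simpa using hzn)
    rw [hspec, ← hμy]
    exact le_trans (le_of_eq (hf zE).symm) h3




lemma gsq_adj {W : Type*} (G : SimpleGraph W) (a b : W) :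
    (gsq G).Adj a b ↔ a ≠ b ∧ (G.Adj a b ∨ ∃ c, G.Adj a c ∧ G.Adj c b) := by
  rw [gsq, fromRel_adj]
  constructor
  · rintro ⟨hne, h⟩
    refine ⟨hne, ?_⟩
    have h' : G.dist a b = 1 ∨ G.dist a b = 2 := by
      rcases h with h | h
      · exact h
      · rwa [SimpleGraph.dist_comm] at h
    rcases h' with h1 | h2
    · exact Or.inl (SimpleGraph.dist_eq_one_iff_adj.mp h1)
    · right
      have hr : G.Reachable a b := SimpleGraph.Reachable.of_dist_ne_zero (by omega)
      obtain ⟨p, hp⟩ := hr.exists_walk_length_eq_dist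
      rw [h2] at hp
      cases p with
      | nil => simp at hp
      | cons hadj q =>
        refine ⟨_, hadj, ?_⟩
        have hq : q.length = 1 := by simpa using hp
        exact SimpleGraph.Walk.adj_of_length_eq_one hq
  · rintro ⟨hne, h⟩
    refine ⟨hne, Or.inl ?_⟩
    rcases h with h | ⟨c, h1, h2⟩
    · exact Or.inl (SimpleGraph.dist_eq_one_iff_adj.mpr h)
    · by_cases had : G.Adj a b
      · exact Or.inl (SimpleGraph.dist_eq_one_iff_adj.mpr had)
      · right
        have hle : G.dist a b ≤ 2 := by
          have := SimpleGraph.dist_le (SimpleGraph.Walk.cons h1 h2.toWalk)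
          simpa using this
        have h0 : G.dist a b ≠ 0 := by
          intro hh
          rcases (SimpleGraph.dist_eq_zero_iff_eq_or_not_reachable).mp hh with h' | h'
          · exact hne h'
          · exact h' ⟨SimpleGraph.Walk.cons h1 h2.toWalk⟩
        have h1' : G.dist a b ≠ 1 := fun hh => had (SimpleGraph.dist_eq_one_iff_adj.mp hh)
        omega

section coalAdj
variable {V₁ V₂ : Type*} (H₁ : SimpleGraph V₁) (v : V₁) (H₂ : SimpleGraph V₂) (w : V₂)

lemma coal_adj_inl_inl (a b : V₁) :
    (coal H₁ v H₂ w).Adj (Sum.inl a) (Sum.inl b) ↔ H₁.Adj a b := by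
  rw [coal, fromRel_adj]
  constructor
  · rintro ⟨hne, h | h⟩
    · exact h
    · exact h.symm
  · intro h
    exact ⟨by simp [h.ne], Or.inl h⟩

lemma coal_adj_inl_inr (a : V₁) (b : {x : V₂ // x ≠ w}) :
    (coal H₁ v H₂ w).Adj (Sum.inl a) (Sum.inr b) ↔ a = v ∧ H₂.Adj w b.1 := by
  rw [coal, fromRel_adj]
  constructor
  · rintro ⟨hne, h | h⟩
    · exact h
    · exact absurd h id
  · intro h
    exact ⟨by simp, Or.inl h⟩

lemma coal_adj_inr_inl (a : {x : V₂ // x ≠ w}) (b : V₁) :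
    (coal H₁ v H₂ w).Adj (Sum.inr a) (Sum.inl b) ↔ b = v ∧ H₂.Adj w a.1 := by
  rw [SimpleGraph.adj_comm, coal_adj_inl_inr]

lemma coal_adj_inr_inr (a b : {x : V₂ // x ≠ w}) :
    (coal H₁ v H₂ w).Adj (Sum.inr a) (Sum.inr b) ↔ H₂.Adj a.1 b.1 := by
  rw [coal, fromRel_adj]
  constructor
  · rintro ⟨hne, h | h⟩
    · exact h
    · exact h.symm
  · intro h
    refine ⟨?_, Or.inl h⟩
    simp only [ne_eq, Sum.inr.injEq]
    intro hh
    exact h.ne (congrArg Subtype.val hh)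

end coalAdj

lemma gsq_one {W : Type*} {Q : SimpleGraph W} {x y : W} (h : Q.Adj x y) : (gsq Q).Adj x y :=
  (gsq_adj Q x y).mpr ⟨h.ne, Or.inl h⟩

lemma gsq_two {W : Type*} {Q : SimpleGraph W} {x c y : W} (h1 : Q.Adj x c) (h2 : Q.Adj c y)
    (hne : x ≠ y) : (gsq Q).Adj x y :=
  (gsq_adj Q x y).mpr ⟨hne, Or.inr ⟨c, h1, h2⟩⟩

lemma gsq_le {W : Type*} (Q : SimpleGraph W) : Q ≤ gsq Q := fun _ _ h => gsq_one h
section main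
variable {V : Type*} [Fintype V] (H : SimpleGraph V) (u : V)

local notation "W'" => (Fin 3 ⊕ {x : V // x ≠ u})

noncomputable def sig : (Fin 3 ⊕ {x : V // x ≠ u}) ≃ (Fin 3 ⊕ {x : V // x ≠ u}) :=
  Equiv.swap (Sum.inl 1) (Sum.inl 2)

set_option linter.unusedSectionVars false in
lemma sig0 : sig (u := u) (Sum.inl 0) = Sum.inl 0 := by
  apply Equiv.swap_apply_of_ne_of_ne <;> simp [Fin.ext_iff]
lemma sig1 : sig (u := u) (Sum.inl 1) = Sum.inl 2 := Equiv.swap_apply_left _ _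
lemma sig2 : sig (u := u) (Sum.inl 2) = Sum.inl 1 := Equiv.swap_apply_right _ _
lemma sigr (a : {x : V // x ≠ u}) : sig (u := u) (Sum.inr a) = Sum.inr a := by
  apply Equiv.swap_apply_of_ne_of_ne <;> simp

-- G₁ = coal (pathGraph 3) 2 H u  (endpoint), G₂ = coal (pathGraph 3) 1 H u (middle)

lemma P3_adj (a b : Fin 3) : (pathGraph 3).Adj a b ↔ (a.val + 1 = b.val ∨ b.val + 1 = a.val) :=
  pathGraph_adj

-- edges of G₂
lemma e2_01 : (coal (pathGraph 3) 1 H u).Adj (Sum.inl 0) (Sum.inl 1) := by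
  rw [coal_adj_inl_inl, P3_adj]; simp
lemma e2_12 : (coal (pathGraph 3) 1 H u).Adj (Sum.inl 1) (Sum.inl 2) := by
  rw [coal_adj_inl_inl, P3_adj]; simp
lemma e2_1r (b : {x : V // x ≠ u}) (hb : H.Adj u b.1) :
    (coal (pathGraph 3) 1 H u).Adj (Sum.inl 1) (Sum.inr b) := by
  rw [coal_adj_inl_inr]; exact ⟨rfl, hb⟩
lemma e2_rr (a b : {x : V // x ≠ u}) (h : H.Adj a.1 b.1) :
    (coal (pathGraph 3) 1 H u).Adj (Sum.inr a) (Sum.inr b) := by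
  rw [coal_adj_inr_inr]; exact h

set_option linter.unusedSectionVars false in
lemma map_lemma : ∀ i j : W', (gsq (coal (pathGraph 3) 2 H u)).Adj i j →
    (gsq (coal (pathGraph 3) 1 H u)).Adj (sig (u := u) i) (sig (u := u) j) := by
  intro i j hij
  rw [gsq_adj] at hij
  obtain ⟨hne, hcase⟩ := hij
  rcases hcase with h | ⟨c, h1, h2⟩
  · -- direct adjacency
    rcases i with a | a <;> rcases j with b | b
    · rw [coal_adj_inl_inl, P3_adj] at h
      fin_cases a <;> fin_cases b <;> simp_all [sig0, sig1, sig2]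
      · exact gsq_two (e2_01 H u) (e2_12 H u) (by simp)
      · exact gsq_two (e2_12 H u).symm (e2_01 H u).symm (by simp)
      · exact gsq_one (e2_12 H u).symm
      · exact gsq_one (e2_12 H u)
    · rw [coal_adj_inl_inr] at h
      obtain ⟨ha, hb⟩ := h
      subst ha
      rw [sig2, sigr]
      exact gsq_one (e2_1r H u b hb)
    · rw [coal_adj_inr_inl] at h
      obtain ⟨hb, ha⟩ := h
      subst hb
      rw [sigr, sig2]
      exact gsq_one (e2_1r H u a ha).symm
    · rw [coal_adj_inr_inr] at h
      rw [sigr, sigr]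
      exact gsq_one (e2_rr H u a b h)
  · -- two-step
    have hne' : sig (u := u) i ≠ sig (u := u) j := fun h => hne ((sig (u := u)).injective h)
    rcases i with a | a <;> rcases c with c | c <;> rcases j with b | b
    · -- lll
      rw [coal_adj_inl_inl, P3_adj] at h1 h2
      fin_cases a <;> fin_cases b <;> fin_cases c <;> simp_all [sig0, sig1, sig2]
      · exact gsq_one (e2_01 H u)
      · exact gsq_one (e2_01 H u).symm
    · -- llr
      rw [coal_adj_inl_inl, P3_adj] at h1
      rw [coal_adj_inl_inr] at h2
      obtain ⟨hc, hb⟩ := h2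
      subst hc
      have ha : a = 1 := by fin_cases a <;> simp_all
      subst ha
      rw [sig1, sigr]
      exact gsq_two (e2_12 H u).symm (e2_1r H u b hb) (by simp)
    · -- lrl
      rw [coal_adj_inl_inr] at h1
      rw [coal_adj_inr_inl] at h2
      obtain ⟨ha, _⟩ := h1
      obtain ⟨hb, _⟩ := h2
      subst ha; subst hb
      exact absurd rfl hne
    · -- lrr
      rw [coal_adj_inl_inr] at h1
      rw [coal_adj_inr_inr] at h2
      obtain ⟨ha, hc⟩ := h1
      subst ha
      rw [sig2, sigr]
      exact gsq_two (e2_1r H u c hc) (e2_rr H u c b h2) (by simp)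
    · -- rll
      rw [coal_adj_inr_inl] at h1
      rw [coal_adj_inl_inl, P3_adj] at h2
      obtain ⟨hc, ha⟩ := h1
      subst hc
      have hb : b = 1 := by fin_cases b <;> simp_all
      subst hb
      rw [sigr, sig1]
      exact gsq_two (e2_1r H u a ha).symm (e2_12 H u) (by simp)
    · -- rlr
      rw [coal_adj_inr_inl] at h1
      rw [coal_adj_inl_inr] at h2
      rw [sigr, sigr]
      exact gsq_two (e2_1r H u a h1.2).symm (e2_1r H u b h2.2) hne
    · -- rrl
      rw [coal_adj_inr_inr] at h1
      rw [coal_adj_inr_inl] at h2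
      obtain ⟨hb, hc⟩ := h2
      subst hb
      rw [sigr, sig2]
      exact gsq_two (e2_rr H u a c h1) (e2_1r H u c hc).symm (by simp)
    · -- rrr
      rw [coal_adj_inr_inr] at h1 h2
      rw [sigr, sigr]
      exact gsq_two (e2_rr H u a c h1) (e2_rr H u c b h2) hne

end main

section conn
set_option linter.unusedSectionVars false
variable {V : Type*} [Fintype V] (H : SimpleGraph V) (u : V)

lemma e1_01 : (coal (pathGraph 3) 2 H u).Adj (Sum.inl 0) (Sum.inl 1) := by
  rw [coal_adj_inl_inl, P3_adj]; simp
lemma e1_12 : (coal (pathGraph 3) 2 H u).Adj (Sum.inl 1) (Sum.inl 2) := by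
  rw [coal_adj_inl_inl, P3_adj]; simp

lemma reach_aux : ∀ (x y : V) (_ : H.Walk x y) (_ : y = u) (hx : x ≠ u),
    (coal (pathGraph 3) 2 H u).Reachable (Sum.inr ⟨x, hx⟩) (Sum.inl 2) := by
  intro x y p
  induction p with
  | nil => intro hy hx; exact absurd hy hx
  | @cons x c _ hadj q ih =>
    intro hy hx
    by_cases hc : c = u
    · have e : (coal (pathGraph 3) 2 H u).Adj (Sum.inr ⟨x, hx⟩) (Sum.inl 2) := by
        rw [coal_adj_inr_inl]; exact ⟨rfl, by simpa [hc] using hadj.symm⟩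
      exact e.reachable
    · have e : (coal (pathGraph 3) 2 H u).Adj (Sum.inr ⟨x, hx⟩) (Sum.inr ⟨c, hc⟩) := by
        rw [coal_adj_inr_inr]; exact hadj
      exact e.reachable.trans (ih hy hc)

lemma G1_pre (hH : H.Connected) : (coal (pathGraph 3) 2 H u).Preconnected := by
  have h2 : ∀ x : (Fin 3 ⊕ {x : V // x ≠ u}), (coal (pathGraph 3) 2 H u).Reachable x (Sum.inl 2) := by
    intro x
    rcases x with a | ⟨a, ha⟩
    · fin_cases a
      · exact (e1_01 H u).reachable.trans (e1_12 H u).reachable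
      · exact (e1_12 H u).reachable
      · rfl
    · obtain ⟨p⟩ := hH a u
      exact reach_aux H u a u p rfl ha
  intro x y
  exact (h2 x).trans (h2 y).symm

lemma exists_adj (hH : H.Connected) (hcard : 1 < Fintype.card V) (a : V) : ∃ b, H.Adj a b := by
  obtain ⟨c, hc⟩ := Fintype.exists_ne_of_one_lt_card hcard a
  obtain ⟨p⟩ := hH a c
  cases p with
  | nil => exact absurd rfl hc
  | cons h q => exact ⟨_, h⟩

lemma G1_nbhd (hH : H.Connected) (hcard : 1 < Fintype.card V) :
    ∀ x : (Fin 3 ⊕ {x : V // x ≠ u}), ∃ y, (coal (pathGraph 3) 2 H u).Adj x y := by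
  intro x
  rcases x with a | ⟨a, ha⟩
  · fin_cases a
    · exact ⟨Sum.inl 1, e1_01 H u⟩
    · exact ⟨Sum.inl 0, (e1_01 H u).symm⟩
    · exact ⟨Sum.inl 1, (e1_12 H u).symm⟩
  · obtain ⟨b, hb⟩ := exists_adj H hH hcard a
    by_cases hbu : b = u
    · subst hbu
      exact ⟨Sum.inl 2, by rw [coal_adj_inr_inl]; exact ⟨rfl, hb.symm⟩⟩
    · exact ⟨Sum.inr ⟨b, hbu⟩, by rw [coal_adj_inr_inr]; exact hb⟩

lemma strict_pair_pos (b : {x : V // x ≠ u}) (hb : H.Adj u b.1) :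
    (gsq (coal (pathGraph 3) 1 H u)).Adj (Sum.inl 0) (Sum.inr b) :=
  gsq_two (e2_01 H u) (e2_1r H u b hb) (by simp)

lemma strict_pair_neg (b : {x : V // x ≠ u}) :
    ¬ (gsq (coal (pathGraph 3) 2 H u)).Adj (Sum.inl 0) (Sum.inr b) := by
  rw [gsq_adj]
  rintro ⟨-, h | ⟨c, h1, h2⟩⟩
  · rw [coal_adj_inl_inr] at h
    exact absurd h.1 (by decide)
  · rcases c with c | c
    · rw [coal_adj_inl_inl, P3_adj] at h1
      rw [coal_adj_inl_inr] at h2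
      obtain ⟨hc, -⟩ := h2
      subst hc
      simp at h1
    · rw [coal_adj_inl_inr] at h1
      exact absurd h1.1 (by decide)

end conn



lemma perron_pos {W : Type*} [Fintype W] (G : SimpleGraph W) (hpc : G.Preconnected)
    (hnt : ∀ v, ∃ w, G.Adj v w) {y : W → ℝ} (hy0 : ∀ i, 0 ≤ y i)
    (hsum : ∑ i, y i ^ 2 = 1) {μ : ℝ} (heig : adjM G *ᵥ y = μ • y) :
    0 < μ ∧ ∀ v, 0 < y v := by
  classical
  have hmv : ∀ v, ∑ j, adjM G v j * y j = μ * y v := fun v => congrFun heig v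
  have key : ∀ v w, G.Adj v w → y v ≤ μ * y w := by
    intro v w hvw
    rw [← hmv w]
    have h1 : adjM G w v * y v ≤ ∑ j, adjM G w j * y j := by
      apply Finset.single_le_sum (f := fun j => adjM G w j * y j)
        (fun j _ => mul_nonneg (adjM_nonneg G w j) (hy0 j)) (mem_univ v)
    rwa [adjM_apply, if_pos hvw.symm, one_mul] at h1
  have hzero : ∀ v w, y v = 0 → G.Adj v w → y w = 0 := by
    intro v w hv hvw
    have h1 : y w ≤ μ * y v := key w v hvw.symm
    rw [hv, mul_zero] at h1
    exact le_antisymm h1 (hy0 w)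
  have hex : ∃ v, 0 < y v := by
    by_contra hcon
    push_neg at hcon
    have : ∀ v, y v = 0 := fun v => le_antisymm (hcon v) (hy0 v)
    simp [this] at hsum
  obtain ⟨v₀, hv₀⟩ := hex
  obtain ⟨w₀, hw₀⟩ := hnt v₀
  have h1 : y v₀ ≤ μ * y w₀ := key v₀ w₀ hw₀
  have hμ : 0 < μ := by nlinarith [hy0 w₀]
  refine ⟨hμ, ?_⟩
  have hwalk : ∀ (a b : W) (_ : G.Walk a b), y a = 0 → y b = 0 := by
    intro a b p
    induction p with
    | nil => exact id
    | cons h q ih => intro ha; exact ih (hzero _ _ ha h)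
  intro v
  rcases lt_or_eq_of_le (hy0 v) with h | h
  · exact h
  · exfalso
    obtain ⟨p⟩ := hpc v v₀
    have := hwalk v v₀ p h.symm
    rw [this] at hv₀
    exact lt_irrefl _ hv₀

/-- Attaching a nontrivial connected graph `H` at the middle
vertex of `P₃` gives a larger spectral radius of the square than attaching it
at an endpoint. -/
theorem specRad_sq_P3_end_lt_middle {V : Type*} [Fintype V] (H : SimpleGraph V)
    (hH : H.Connected) (hcard : 1 < Fintype.card V) (u : V) :
    specRad (gsq (coal (pathGraph 3) 2 H u)) <
      specRad (gsq (coal (pathGraph 3) 1 H u)) := by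
  classical
  haveI : Nonempty (Fin 3 ⊕ {x : V // x ≠ u}) := ⟨Sum.inl 0⟩
  obtain ⟨y, hy0, hysum, heig, hqf, -⟩ := specRad_spec (gsq (coal (pathGraph 3) 2 H u))
  obtain ⟨w2, -, -, -, -, hmax2⟩ := specRad_spec (gsq (coal (pathGraph 3) 1 H u))
  have hpre : (gsq (coal (pathGraph 3) 2 H u)).Preconnected :=
    SimpleGraph.Preconnected.mono (gsq_le _) (G1_pre H u hH)
  have hnt : ∀ v, ∃ w, (gsq (coal (pathGraph 3) 2 H u)).Adj v w := fun v => by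
    obtain ⟨w, hw⟩ := G1_nbhd H u hH hcard v
    exact ⟨w, gsq_one hw⟩
  obtain ⟨hμpos, hypos⟩ := perron_pos _ hpre hnt hy0 hysum heig
  obtain ⟨b, hb⟩ := exists_adj H hH hcard u
  set qv : {x : V // x ≠ u} := ⟨b, hb.ne'⟩ with hqv
  set z : (Fin 3 ⊕ {x : V // x ≠ u}) → ℝ := fun i => y (sig (u := u) i) with hzdef
  have hzsum : ∑ i, z i ^ 2 = 1 := by
    have h := Equiv.sum_comp (sig (u := u)) (fun i => y i ^ 2)
    rw [← hysum]
    exact h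
  have hswap : ∀ i, z (sig (u := u) i) = y i := fun i => by
    show y (sig (u := u) (sig (u := u) i)) = y i
    rw [sig, Equiv.swap_apply_self]
  have hre : qf (gsq (coal (pathGraph 3) 1 H u)) z =
      ∑ i, ∑ j, adjM (gsq (coal (pathGraph 3) 1 H u)) (sig (u := u) i) (sig (u := u) j) * y j * y i := by
    unfold qf
    rw [← Equiv.sum_comp (sig (u := u))
      (fun i => ∑ j, adjM (gsq (coal (pathGraph 3) 1 H u)) i j * z j * z i)]
    apply Finset.sum_congr rfl
    intro i _
    rw [← Equiv.sum_comp (sig (u := u))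
      (fun j => adjM (gsq (coal (pathGraph 3) 1 H u)) (sig (u := u) i) j * z j * z (sig (u := u) i))]
    apply Finset.sum_congr rfl
    intro j _
    rw [hswap, hswap]
  have hterm : ∀ i j, adjM (gsq (coal (pathGraph 3) 2 H u)) i j * y j * y i ≤
      adjM (gsq (coal (pathGraph 3) 1 H u)) (sig (u := u) i) (sig (u := u) j) * y j * y i := by
    intro i j
    by_cases h : (gsq (coal (pathGraph 3) 2 H u)).Adj i j
    · rw [adjM_apply, if_pos h, adjM_apply, if_pos (map_lemma H u i j h)]
    · rw [adjM_apply, if_neg h, zero_mul, zero_mul]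
      exact mul_nonneg (mul_nonneg (adjM_nonneg _ _ _) (hy0 j)) (hy0 i)
  have hlt : adjM (gsq (coal (pathGraph 3) 2 H u)) (Sum.inl 0) (Sum.inr qv) * y (Sum.inr qv) * y (Sum.inl 0) <
      adjM (gsq (coal (pathGraph 3) 1 H u)) (sig (u := u) (Sum.inl 0)) (sig (u := u) (Sum.inr qv)) * y (Sum.inr qv) * y (Sum.inl 0) := by
    rw [adjM_apply, if_neg (strict_pair_neg H u qv), sig0, sigr, adjM_apply,
      if_pos (strict_pair_pos H u qv hb), zero_mul, zero_mul, one_mul]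
    exact mul_pos (hypos _) (hypos _)
  have hstep : ∑ i, ∑ j, adjM (gsq (coal (pathGraph 3) 2 H u)) i j * y j * y i <
      ∑ i, ∑ j, adjM (gsq (coal (pathGraph 3) 1 H u)) (sig (u := u) i) (sig (u := u) j) * y j * y i := by
    apply Finset.sum_lt_sum
    · intro i _
      exact Finset.sum_le_sum fun j _ => hterm i j
    · refine ⟨Sum.inl 0, mem_univ _, ?_⟩
      exact Finset.sum_lt_sum (fun j _ => hterm _ j) ⟨Sum.inr qv, mem_univ _, hlt⟩
  calc specRad (gsq (coal (pathGraph 3) 2 H u))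
      = qf (gsq (coal (pathGraph 3) 2 H u)) y := hqf.symm
    _ < qf (gsq (coal (pathGraph 3) 1 H u)) z := by
        rw [hre]; unfold qf; exact hstep
    _ ≤ specRad (gsq (coal (pathGraph 3) 1 H u)) := hmax2 z hzsum
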